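/- Let T and T' be pseudo MUL-trees on X, N a phylogenetic network on X, g : T' → N an X-morphism, and f : T → N a folding map. Then there exists an X-morphism g̃ : T' → T with f ∘ g̃ = g. Moreover, if g is a rooted X-morphism (maps root to root), then g̃ is rooted and is the unique such map. -/

import Mathlib

/-! Basic framework: labelled rooted directed multigraphs, phylogenetic
networks, (pseudo) MUL-trees, unfolding, folding maps, etc. -/

structure Dgr (X : Type) : Type 1 where
  V : Type
  A : Type
  tl : A → V
  hd : A → V
  root : V
  lab : V → Option X

namespace Dgr

variable {X : Type}

/-- There is an arc from `u` to `v`. -/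
def arcRel (G : Dgr X) (u v : G.V) : Prop := ∃ a : G.A, G.tl a = u ∧ G.hd a = v

/-- `v` is reachable from `u` by a directed path (possibly trivial);
equivalently, `v` is below `u` or equal to it. -/
def Reaches (G : Dgr X) : G.V → G.V → Prop := Relation.ReflTransGen G.arcRel

noncomputable def indeg (G : Dgr X) (v : G.V) : ℕ := Nat.card {a : G.A // G.hd a = v}
noncomputable def outdeg (G : Dgr X) (v : G.V) : ℕ := Nat.card {a : G.A // G.tl a = v}

def IsLeaf (G : Dgr X) (v : G.V) : Prop := G.outdeg v = 0

def Acyclic (G : Dgr X) : Prop := ∀ v, ¬ Relation.TransGen G.arcRel v v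

/-- A finite rooted DAG: acyclic, the root has in-degree zero and every
vertex is reachable from the root. -/
def IsRootedDAG (G : Dgr X) : Prop :=
  Finite G.V ∧ Finite G.A ∧ G.Acyclic ∧ G.indeg G.root = 0 ∧ ∀ v, G.Reaches G.root v

/-- A tree vertex: in-degree one, out-degree zero (a leaf) or at least two. -/
def IsTreeVertex (G : Dgr X) (v : G.V) : Prop :=
  G.indeg v = 1 ∧ (G.outdeg v = 0 ∨ 2 ≤ G.outdeg v)

/-- A reticulation vertex: out-degree one and in-degree at least two. -/
def IsRetVertex (G : Dgr X) (v : G.V) : Prop := G.outdeg v = 1 ∧ 2 ≤ G.indeg v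

/-- An `X`-network: rooted DAG (multi-arcs allowed), root of out-degree ≥ 2,
every non-root vertex a tree vertex or a reticulation vertex, and the leaves
are labelled bijectively by `X`. -/
def IsXNetwork (G : Dgr X) : Prop :=
  G.IsRootedDAG ∧ 2 ≤ G.outdeg G.root ∧
  (∀ v, v ≠ G.root → G.IsTreeVertex v ∨ G.IsRetVertex v) ∧
  (∀ v, (∃ x, G.lab v = some x) ↔ G.IsLeaf v) ∧
  (∀ x : X, ∃! v, G.lab v = some x)

def NoMultiArcs (G : Dgr X) : Prop :=
  ∀ a b : G.A, G.tl a = G.tl b → G.hd a = G.hd b → a = b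

/-- A phylogenetic network on `X`: an `X`-network without multi-arcs. -/
def IsPhyloNetwork (G : Dgr X) : Prop := G.IsXNetwork ∧ G.NoMultiArcs

/-- A phylogenetic tree on `X`: a phylogenetic network with no reticulations. -/
def IsPhyloTree (G : Dgr X) : Prop := G.IsPhyloNetwork ∧ ∀ v, ¬ G.IsRetVertex v

/-- A pseudo MUL-tree on `X`: a finite rooted tree whose leaves are labelled
by elements of `X` (several leaves may share a label, every element of `X`
is used, and exactly the leaves are labelled). -/
def IsPMulTree (G : Dgr X) : Prop :=
  G.IsRootedDAG ∧ (∀ v, v ≠ G.root → G.indeg v = 1) ∧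
  (∀ v, (∃ x, G.lab v = some x) ↔ G.IsLeaf v) ∧
  (∀ x : X, ∃ v, G.lab v = some x)

/-- A MUL-tree: a pseudo MUL-tree with no in-degree-one out-degree-one vertex. -/
def IsMulTree (G : Dgr X) : Prop :=
  G.IsPMulTree ∧ ∀ v, ¬ (G.indeg v = 1 ∧ G.outdeg v = 1)

/-- Isomorphism of labelled rooted directed multigraphs. -/
def Iso (G H : Dgr X) : Prop :=
  ∃ (φ : G.V ≃ H.V) (ψ : G.A ≃ H.A),
    (∀ a, H.tl (ψ a) = φ (G.tl a)) ∧ (∀ a, H.hd (ψ a) = φ (G.hd a)) ∧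
    φ G.root = H.root ∧ (∀ v, H.lab (φ v) = G.lab v)

/-- The pendant subgraph rooted at `v` (everything below or equal to `v`). -/
def pendant (G : Dgr X) (v : G.V) : Dgr X where
  V := {w : G.V // G.Reaches v w}
  A := {a : G.A // G.Reaches v (G.tl a)}
  tl a := ⟨G.tl a.1, a.2⟩
  hd a := ⟨G.hd a.1, a.2.tail ⟨a.1, rfl, rfl⟩⟩
  root := ⟨v, Relation.ReflTransGen.refl⟩
  lab w := G.lab w.1

/-- Directed paths in `G` starting at the root, ending at the index vertex. -/
inductive RPath (G : Dgr X) : G.V → Type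
  | nil : RPath G G.root
  | cons {v : G.V} (p : RPath G v) (a : G.A) (h : G.tl a = v) : RPath G (G.hd a)

/-- The path-tree `U*(G)`: vertices are directed root-paths of `G`, arcs are
one-arc extensions, the label of a path is the label of its last vertex. -/
def Ustar (G : Dgr X) : Dgr X where
  V := Σ v : G.V, RPath G v
  A := Σ v : G.V, RPath G v × {a : G.A // G.tl a = v}
  tl x := ⟨x.1, x.2.1⟩
  hd x := ⟨G.hd x.2.2.1, RPath.cons x.2.1 x.2.2.1 x.2.2.2⟩
  root := ⟨G.root, RPath.nil⟩
  lab x := G.lab x.1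

/-- Vertices kept by the suppression operation (the root is always kept). -/
def Keep (G : Dgr X) (v : G.V) : Prop :=
  v = G.root ∨ ¬ (G.indeg v = 1 ∧ G.outdeg v = 1)

def startV (G : Dgr X) (l : List G.A) : G.V :=
  match l.head? with
  | some a => G.tl a
  | none => G.root

def endV (G : Dgr X) (l : List G.A) : G.V :=
  match l.getLast? with
  | some a => G.hd a
  | none => G.root

/-- `l` is a composable sequence of arcs. -/
def IsChain (G : Dgr X) (l : List G.A) : Prop :=
  ∀ p a b s, l = p ++ a :: b :: s → G.hd a = G.tl b

/-- An arc of the suppression: a nonempty directed path between kept vertices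
all of whose intermediate vertices are suppressed. -/
def IsSuppArc (G : Dgr X) (l : List G.A) : Prop :=
  l ≠ [] ∧ G.IsChain l ∧ G.Keep (G.startV l) ∧ G.Keep (G.endV l) ∧
  ∀ p a s, l = p ++ a :: s → s ≠ [] → ¬ G.Keep (G.hd a)

/-- Suppression of all in-degree-one out-degree-one vertices. -/
def suppress (G : Dgr X) : Dgr X where
  V := {v : G.V // G.Keep v}
  A := {l : List G.A // G.IsSuppArc l}
  tl l := ⟨G.startV l.1, l.2.2.2.1⟩
  hd l := ⟨G.endV l.1, l.2.2.2.2.1⟩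
  root := ⟨G.root, Or.inl rfl⟩
  lab v := G.lab v.1

/-- The unfolding `U(G)`: the path-tree with in-degree-one out-degree-one
vertices suppressed. -/
def U (G : Dgr X) : Dgr X := G.Ustar.suppress

/-- An `X`-morphism: maps on vertices and arcs commuting with heads and tails
and preserving the leaf-labelling by `X`. -/
structure Mor (G H : Dgr X) where
  fV : G.V → H.V
  fA : G.A → H.A
  tl_comm : ∀ a, H.tl (fA a) = fV (G.tl a)
  hd_comm : ∀ a, H.hd (fA a) = fV (G.hd a)
  lab_pres : ∀ v x, G.lab v = some x → H.lab (fV v) = some x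

def Mor.IsRooted {G H : Dgr X} (f : Mor G H) : Prop := f.fV G.root = H.root

/-- A folding map: a surjective `X`-morphism with the unique arc-lifting
property. -/
def Mor.IsFolding {G H : Dgr X} (f : Mor G H) : Prop :=
  Function.Surjective f.fV ∧ Function.Surjective f.fA ∧
  ∀ (a : H.A) (v : G.V), f.fV v = H.tl a →
    ∃! b : G.A, G.tl b = v ∧ f.fA b = a

/-- The canonical map `U*(G) → G` sending a root-path to its last vertex. -/
def fstar (G : Dgr X) : Mor G.Ustar G where
  fV x := x.1
  fA x := x.2.2.1
  tl_comm a := a.2.2.2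
  hd_comm _ := rfl
  lab_pres _ _ h := h

/-- `v` is an interior vertex of the arc-sequence `l`. -/
def IsInteriorOf (G : Dgr X) (l : List G.A) (v : G.V) : Prop :=
  ∃ p a s, l = p ++ a :: s ∧ s ≠ [] ∧ G.hd a = v

/-- `G'` is a subdivision of `G`. -/
def IsSubdivisionOf (G' G : Dgr X) : Prop :=
  ∃ (φ : G.V → G'.V) (ψ : G.A → List G'.A),
    Function.Injective φ ∧ φ G.root = G'.root ∧
    (∀ v, G'.lab (φ v) = G.lab v) ∧
    (∀ a, ψ a ≠ [] ∧ G'.IsChain (ψ a) ∧ G'.startV (ψ a) = φ (G.tl a) ∧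
      G'.endV (ψ a) = φ (G.hd a) ∧
      ∀ v, G'.IsInteriorOf (ψ a) v → v ∉ Set.range φ) ∧
    (∀ v' : G'.V, v' ∉ Set.range φ →
      G'.indeg v' = 1 ∧ G'.outdeg v' = 1 ∧ G'.lab v' = none) ∧
    (∀ a' : G'.A, ∃! a : G.A, a' ∈ ψ a)

/-- `H` is (isomorphic to) a subgraph of `G`. -/
def IsSubgraphOf (H G : Dgr X) : Prop :=
  ∃ (φ : H.V → G.V) (ψ : H.A → G.A),
    Function.Injective φ ∧ Function.Injective ψ ∧
    (∀ a, G.tl (ψ a) = φ (H.tl a)) ∧ (∀ a, G.hd (ψ a) = φ (H.hd a)) ∧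
    (∀ v, H.lab v = G.lab (φ v))

/-- `G` displays `T`: some subgraph of `G` is a subdivision of `T`. -/
def Displays (G T : Dgr X) : Prop :=
  ∃ H : Dgr X, IsSubgraphOf H G ∧ IsSubdivisionOf H T

/-- `T` is weakly displayed by `G`: `T` is displayed by the unfolding `U(G)`. -/
def WeaklyDisplays (G T : Dgr X) : Prop := Displays G.U T

/-- `N` is (isomorphic to) the folding `F(T)` of the MUL-tree `T`: `N` is an
`X`-network obtained as the quotient of a subdivision `T'` of `T` by the
relation identifying vertices with isomorphic pendant subtrees, the quotient
map being a folding map whose fibres are exactly the classes of that relation. -/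
def IsFoldingOf (N T : Dgr X) : Prop :=
  N.IsXNetwork ∧ ∃ T' : Dgr X, IsSubdivisionOf T' T ∧
    ∃ f : Mor T' N, f.IsFolding ∧
      ∀ u v : T'.V, f.fV u = f.fV v ↔ Iso (T'.pendant u) (T'.pendant v)

/-- `N` is stable: `F(U(N))` is isomorphic to `N`. -/
def Stable (N : Dgr X) : Prop :=
  ∃ N' : Dgr X, IsFoldingOf N' N.U ∧ Iso N' N

/-- `T'` is the guide tree `T†` of the folding operation applied to `T`:
a subdivision of `T` whose quotient by the isomorphic-pendant-subtree
relation is an `X`-network via a folding map. -/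
def IsDaggerOf (T' T : Dgr X) : Prop :=
  IsSubdivisionOf T' T ∧ ∃ (N : Dgr X) (f : Mor T' N), N.IsXNetwork ∧
    f.IsFolding ∧
    ∀ u v : T'.V, f.fV u = f.fV v ↔ Iso (T'.pendant u) (T'.pendant v)

/-- The child of every reticulation vertex is a tree vertex. -/
def Compressed (N : Dgr X) : Prop :=
  ∀ a : N.A, N.IsRetVertex (N.tl a) → N.IsTreeVertex (N.hd a)

/-- Every (non-leaf) tree vertex has out-degree two. -/
def SemiResolved (N : Dgr X) : Prop :=
  ∀ v, N.indeg v = 1 → N.outdeg v = 0 ∨ N.outdeg v = 2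

/-- Binary phylogenetic network. -/
def BinaryNet (N : Dgr X) : Prop :=
  N.outdeg N.root = 2 ∧ ∀ v, v ≠ N.root →
    (N.IsRetVertex v → N.indeg v = 2) ∧
    (N.indeg v = 1 → N.outdeg v = 0 ∨ N.outdeg v = 2)

/-- Binary tree: every vertex has out-degree zero or two. -/
def BinaryTree (T : Dgr X) : Prop := ∀ v, T.outdeg v = 0 ∨ T.outdeg v = 2

/-- The set of children of a vertex. -/
def children (N : Dgr X) (v : N.V) : Set N.V := {w | ∃ a, N.tl a = v ∧ N.hd a = w}

/-- Tree-sibling network: every reticulation vertex has a sibling that is a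
tree vertex. -/
def TreeSibling (N : Dgr X) : Prop :=
  ∀ v, N.IsRetVertex v → ∃ w, w ≠ v ∧ N.IsTreeVertex w ∧
    ∃ a b : N.A, N.tl a = N.tl b ∧ N.hd a = v ∧ N.hd b = w

/-- The final vertex in `N` of (the path underlying) a vertex of `U(N)`. -/
def endOf (N : Dgr X) (p : N.U.V) : N.V := p.1.1

/-- Identifiable pair of tree vertices. -/
def Identifiable (N : Dgr X) (v w : N.V) : Prop :=
  v ≠ w ∧ N.IsTreeVertex v ∧ N.IsTreeVertex w ∧
  ∃ p q : N.U.V, N.endOf p = v ∧ N.endOf q = w ∧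
    Iso (N.U.pendant p) (N.U.pendant q)

/-- Irreducible network: no identifiable pair of tree vertices. -/
def Irreducible (N : Dgr X) : Prop := ¬ ∃ v w, N.Identifiable v w

/-- The pendant subtree at `v` is inextendible: some other vertex carries an
isomorphic pendant subtree. -/
def Inextendible (T : Dgr X) (v : T.V) : Prop :=
  ∃ v', v' ≠ v ∧ Iso (T.pendant v) (T.pendant v')

/-- A reconciliation map between a tree `T` and a network `N`. -/
structure Recon (T N : Dgr X) where
  r : T.V → N.V
  P : T.A → List N.A
  tree_or_root : ∀ v, r v = N.root ∨ N.IsTreeVertex (r v)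
  leaf_fix : ∀ v x, T.lab v = some x → N.lab (r v) = some x
  chain : ∀ a, N.IsChain (P a)
  trivialP : ∀ a, P a = [] → r (T.tl a) = r (T.hd a)
  startP : ∀ a, P a ≠ [] → N.startV (P a) = r (T.tl a)
  endP : ∀ a, P a ≠ [] → N.endV (P a) = r (T.hd a)

/-- Locally separated reconciliation: for any two distinct arcs of `T` with
the same tail, both associated paths are nonempty and have distinct initial
arcs. -/
def Recon.LocSep {T N : Dgr X} (ρ : Recon T N) : Prop :=
  ∀ a b : T.A, a ≠ b → T.tl a = T.tl b →
    ρ.P a ≠ [] ∧ ρ.P b ≠ [] ∧ (ρ.P a).head? ≠ (ρ.P b).head?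

/-- The pendant subnetwork `N(u)`: restrict below `u` and suppress. -/
def Nsub (N : Dgr X) (u : N.V) : Dgr X := (N.pendant u).suppress

/-- The function `τ` of the dynamic program (as a proposition, `τ(v,u)=1`). -/
def tau (T N : Dgr X) (v : T.V) (u : N.V) : Prop :=
  (T.IsLeaf v → ∀ x, T.lab v = some x →
     ∃ u' : N.V, N.lab u' = some x ∧ N.Reaches u u') ∧
  (¬ T.IsLeaf v → ∃ u' : N.V, (u' = N.root ∨ N.IsTreeVertex u') ∧
     N.Reaches u u' ∧ ∃ ρ : Recon (T.pendant v) (N.Nsub u'), ρ.LocSep)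

/-- The result of `HangLeaves(v)` on the network `N` (new leaves are labelled
by the two new elements of `X ⊕ Fin 2`); vertices `inr 0, 1, 2, 3, 4` are
`x_v, x'_v, p_v, q_v, ρ_v` respectively. -/
def HangN (N : Dgr X) (v : N.V) : Dgr (X ⊕ Fin 2) where
  V := N.V ⊕ Fin 5
  A := N.A ⊕ Fin 6
  tl := Sum.elim (fun a => Sum.inl (N.tl a))
    ![Sum.inr 4, Sum.inr 4, Sum.inr 2, Sum.inl v, Sum.inr 2, Sum.inr 3]
  hd := Sum.elim (fun a => Sum.inl (N.hd a))
    ![Sum.inl N.root, Sum.inr 2, Sum.inr 3, Sum.inr 3, Sum.inr 1, Sum.inr 0]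
  root := Sum.inr 4
  lab := Sum.elim (fun w => (N.lab w).map Sum.inl)
    ![some (Sum.inr 0), some (Sum.inr 1), none, none, none]

/-- The result of `HangLeaves` on the tree `T`; vertices `inr 0, 1, 2, 3` are
`x_v, x'_v, p_v, ρ_v` respectively. -/
def HangT (T : Dgr X) : Dgr (X ⊕ Fin 2) where
  V := T.V ⊕ Fin 4
  A := T.A ⊕ Fin 4
  tl := Sum.elim (fun a => Sum.inl (T.tl a))
    ![Sum.inr 3, Sum.inr 3, Sum.inr 2, Sum.inr 2]
  hd := Sum.elim (fun a => Sum.inl (T.hd a))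
    ![Sum.inl T.root, Sum.inr 2, Sum.inr 0, Sum.inr 1]
  root := Sum.inr 3
  lab := Sum.elim (fun w => (T.lab w).map Sum.inl)
    ![some (Sum.inr 0), some (Sum.inr 1), none, none]

end Dgr

/-! ### Auxiliary machinery for the lifting theorem -/

namespace DgrLift

open Dgr

variable {X : Type} {T T' N : Dgr X}

/-- Every non-root vertex of a pseudo MUL-tree has a unique incoming arc. -/
lemma parent_exu (hT' : T'.IsPMulTree) {v : T'.V} (hv : v ≠ T'.root) :
    ∃! a : T'.A, T'.hd a = v := by
  have h1 := hT'.2.1 v hv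
  rw [Dgr.indeg, Nat.card_eq_one_iff_unique] at h1
  obtain ⟨hs, ⟨a, ha⟩⟩ := h1
  exact ⟨a, ha, fun b hb => congrArg Subtype.val (hs.elim ⟨b, hb⟩ ⟨a, ha⟩)⟩

/-- No arc points to the root of a graph whose root has in-degree zero. -/
lemma no_arc_to_root (hA : Finite T'.A) (h0 : T'.indeg T'.root = 0) (a : T'.A) :
    T'.hd a ≠ T'.root := by
  intro ha
  have : Nat.card {b : T'.A // T'.hd b = T'.root} ≠ 0 :=
    Nat.card_ne_zero.mpr ⟨⟨⟨a, ha⟩⟩, inferInstance⟩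
  exact this h0

/-- The ancestor relation on a pseudo MUL-tree is well-founded. -/
lemma wf_anc (hT' : T'.IsPMulTree) :
    WellFounded (fun u v : T'.V => Relation.TransGen T'.arcRel u v) := by
  have : Finite T'.V := hT'.1.1
  have hacy : T'.Acyclic := hT'.1.2.2.1
  letI : IsTrans T'.V (fun u v => Relation.TransGen T'.arcRel u v) :=
    ⟨fun _ _ _ h1 h2 => h1.trans h2⟩
  letI : IsIrrefl T'.V (fun u v => Relation.TransGen T'.arcRel u v) :=
    ⟨fun v h => hacy v h⟩
  exact Finite.wellFounded_of_trans_of_irrefl _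

section Construction

variable (hT' : T'.IsPMulTree) (g : Mor T' N) (f : Mor T N)
  (hf : ∀ (a : N.A) (v : T.V), f.fV v = N.tl a → ∃! b : T.A, T.tl b = v ∧ f.fA b = a)
  (t0 : T.V) (ht0 : f.fV t0 = g.fV T'.root)

open Classical in
/-- The lifted vertex map, carrying its commuting property. -/
noncomputable def liftV : ∀ v : T'.V, {t : T.V // f.fV t = g.fV v} :=
  (wf_anc hT').fix (fun v ih =>
    if h : v = T'.root then ⟨t0, by rw [h]; exact ht0⟩
    else
      have ha : T'.hd (parent_exu hT' h).exists.choose = v :=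
        (parent_exu hT' h).exists.choose_spec
      have w := ih (T'.tl (parent_exu hT' h).exists.choose)
        (Relation.TransGen.single ⟨_, rfl, ha⟩)
      have hw : f.fV w.1 = N.tl (g.fA (parent_exu hT' h).exists.choose) := by
        rw [w.2, g.tl_comm]
      have hb := (hf (g.fA (parent_exu hT' h).exists.choose) w.1 hw).exists.choose_spec
      ⟨T.hd (hf (g.fA (parent_exu hT' h).exists.choose) w.1 hw).exists.choose, by
        rw [← f.hd_comm, hb.2, g.hd_comm, ha]⟩)

lemma liftV_root : (liftV hT' g f hf t0 ht0 T'.root).1 = t0 := by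
  rw [liftV, WellFounded.fix_eq]
  simp

/-- The lifted arc map. -/
noncomputable def liftA (a : T'.A) : T.A :=
  (hf (g.fA a) (liftV hT' g f hf t0 ht0 (T'.tl a)).1
    (by rw [(liftV hT' g f hf t0 ht0 (T'.tl a)).2, g.tl_comm])).exists.choose

lemma liftA_spec (a : T'.A) :
    T.tl (liftA hT' g f hf t0 ht0 a) = (liftV hT' g f hf t0 ht0 (T'.tl a)).1 ∧
      f.fA (liftA hT' g f hf t0 ht0 a) = g.fA a :=
  (hf (g.fA a) (liftV hT' g f hf t0 ht0 (T'.tl a)).1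
    (by rw [(liftV hT' g f hf t0 ht0 (T'.tl a)).2, g.tl_comm])).exists.choose_spec

lemma choose_congr {a1 a2 : N.A} {v1 v2 : T.V}
    (h1 : f.fV v1 = N.tl a1) (h2 : f.fV v2 = N.tl a2)
    (e1 : a1 = a2) (e2 : v1 = v2) :
    (hf a1 v1 h1).exists.choose = (hf a2 v2 h2).exists.choose := by
  subst e1; subst e2; rfl

lemma liftV_hd (a : T'.A) :
    (liftV hT' g f hf t0 ht0 (T'.hd a)).1 = T.hd (liftA hT' g f hf t0 ht0 a) := by
  have hroot : T'.hd a ≠ T'.root := no_arc_to_root hT'.1.2.1 hT'.1.2.2.2.1 a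
  conv_lhs => rw [liftV, WellFounded.fix_eq]
  simp only [dif_neg hroot]
  have ha' : (parent_exu hT' hroot).exists.choose = a := (parent_exu hT' hroot).unique
    (parent_exu hT' hroot).exists.choose_spec rfl
  exact congrArg T.hd (choose_congr f hf
    (show f.fV (liftV hT' g f hf t0 ht0
          (T'.tl (parent_exu hT' hroot).exists.choose)).1
        = N.tl (g.fA (parent_exu hT' hroot).exists.choose) by
      rw [(liftV hT' g f hf t0 ht0 _).2, g.tl_comm])
    (show f.fV (liftV hT' g f hf t0 ht0 (T'.tl a)).1 = N.tl (g.fA a) by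
      rw [(liftV hT' g f hf t0 ht0 _).2, g.tl_comm])
    (congrArg g.fA ha')
    (show (liftV hT' g f hf t0 ht0 (T'.tl (parent_exu hT' hroot).exists.choose)).1
        = (liftV hT' g f hf t0 ht0 (T'.tl a)).1 by rw [ha']))

end Construction

/-- Labels pull back along an `X`-morphism from a pseudo MUL-tree to a
phylogenetic network. -/
lemma lab_lift (hT : T.IsPMulTree) (hN : N.IsPhyloNetwork) (f : Mor T N)
    (w : T.V) (x : X) (hx : N.lab (f.fV w) = some x) : T.lab w = some x := by
  have hleafN : N.IsLeaf (f.fV w) := (hN.1.2.2.2.1 (f.fV w)).1 ⟨x, hx⟩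
  have hleafT : T.IsLeaf w := by
    by_contra hw
    have hfin : Finite T.A := hT.1.2.1
    rw [Dgr.IsLeaf, Dgr.outdeg, Nat.card_eq_zero] at hw
    push_neg at hw
    obtain ⟨⟨a, ha⟩⟩ := hw.1
    have hfinN : Finite N.A := hN.1.1.2.1
    have : Nat.card {b : N.A // N.tl b = f.fV w} ≠ 0 :=
      Nat.card_ne_zero.mpr ⟨⟨⟨f.fA a, by rw [f.tl_comm, ha]⟩⟩, inferInstance⟩
    exact this hleafN
  obtain ⟨y, hy⟩ := (hT.2.2.1 w).2 hleafT
  have h2 := f.lab_pres w y hy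
  rw [hx] at h2
  injection h2 with h
  rw [hy, h]

/-- Any preimage of the root of `N` under an `X`-morphism from a pseudo
MUL-tree is the root. -/
lemma preimage_root (hT : T.IsPMulTree) (hNA : Finite N.A)
    (hN0 : N.indeg N.root = 0) (f : Mor T N) (w : T.V)
    (hw : f.fV w = N.root) : w = T.root := by
  by_contra h
  obtain ⟨a, ha, -⟩ := parent_exu hT h
  have : Nat.card {b : N.A // N.hd b = N.root} ≠ 0 :=
    Nat.card_ne_zero.mpr ⟨⟨⟨f.fA a, by rw [f.hd_comm, ha, hw]⟩⟩, inferInstance⟩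
  exact this hN0

/-- Extensionality for morphisms. -/
lemma mor_ext {G H : Dgr X} {m1 m2 : Mor G H}
    (h1 : m1.fV = m2.fV) (h2 : m1.fA = m2.fA) : m1 = m2 := by
  obtain ⟨f1, a1, p1, q1, r1⟩ := m1
  obtain ⟨f2, a2, p2, q2, r2⟩ := m2
  dsimp only at h1 h2
  subst h1; subst h2
  rfl

end DgrLift

/-- Lifting through a folding map: given an `X`-morphism
`g : T' → N` and a folding map `f : T → N`, there is an `X`-morphism
`g̃ : T' → T` with `f ∘ g̃ = g`; moreover if `g` is rooted then `g̃` is the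
unique rooted such morphism. -/
theorem lifting (X : Type) (T T' N : Dgr X) (hT : T.IsPMulTree)
    (hT' : T'.IsPMulTree) (hN : N.IsPhyloNetwork)
    (g : Dgr.Mor T' N) (f : Dgr.Mor T N) (hf : f.IsFolding) :
    (∃ gt : Dgr.Mor T' T,
        (∀ v, f.fV (gt.fV v) = g.fV v) ∧ (∀ a, f.fA (gt.fA a) = g.fA a)) ∧
    (g.IsRooted →
      ∃! gt : Dgr.Mor T' T, gt.IsRooted ∧
        (∀ v, f.fV (gt.fV v) = g.fV v) ∧ (∀ a, f.fA (gt.fA a) = g.fA a)) := by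
  classical
  obtain ⟨hsV, hsA, hlift⟩ := hf
  obtain ⟨t0, ht0⟩ := hsV (g.fV T'.root)
  -- the constructed lift
  let gtV : T'.V → T.V := fun v => (DgrLift.liftV hT' g f hlift t0 ht0 v).1
  let gtA : T'.A → T.A := DgrLift.liftA hT' g f hlift t0 ht0
  have hcommV : ∀ v, f.fV (gtV v) = g.fV v :=
    fun v => (DgrLift.liftV hT' g f hlift t0 ht0 v).2
  have hcommA : ∀ a, f.fA (gtA a) = g.fA a :=
    fun a => (DgrLift.liftA_spec hT' g f hlift t0 ht0 a).2
  have htl : ∀ a, T.tl (gtA a) = gtV (T'.tl a) :=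
    fun a => (DgrLift.liftA_spec hT' g f hlift t0 ht0 a).1
  have hhd : ∀ a, T.hd (gtA a) = gtV (T'.hd a) :=
    fun a => (DgrLift.liftV_hd hT' g f hlift t0 ht0 a).symm
  have hlab : ∀ v x, T'.lab v = some x → T.lab (gtV v) = some x := by
    intro v x hv
    have : N.lab (f.fV (gtV v)) = some x := by
      rw [hcommV v]; exact g.lab_pres v x hv
    exact DgrLift.lab_lift hT hN f (gtV v) x this
  let gt : Dgr.Mor T' T := ⟨gtV, gtA, htl, hhd, hlab⟩
  refine ⟨⟨gt, hcommV, hcommA⟩, ?_⟩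
  -- rooted case
  intro hg
  have hNA : Finite N.A := hN.1.1.2.1
  have hN0 : N.indeg N.root = 0 := hN.1.1.2.2.2.1
  have ht0' : t0 = T.root := by
    apply DgrLift.preimage_root hT hNA hN0 f
    rw [ht0, hg]
  have hgtroot : gt.fV T'.root = T.root := by
    show gtV T'.root = T.root
    rw [show gtV T'.root = t0 from DgrLift.liftV_root hT' g f hlift t0 ht0, ht0']
  refine ⟨gt, ⟨hgtroot, hcommV, hcommA⟩, ?_⟩
  rintro h' ⟨h'root, h'V, h'A⟩
  -- the vertex maps agree, by well-founded induction
  have hVeq : ∀ v, h'.fV v = gt.fV v := by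
    intro v
    induction v using (DgrLift.wf_anc hT').induction with
    | _ v ih =>
      by_cases h : v = T'.root
      · rw [h, h'root, hgtroot]
      · obtain ⟨a, ha, -⟩ := DgrLift.parent_exu hT' h
        have ihA : h'.fV (T'.tl a) = gt.fV (T'.tl a) :=
          ih (T'.tl a) (Relation.TransGen.single ⟨a, rfl, ha⟩)
        have hAeq : h'.fA a = gt.fA a := by
          have hfv : f.fV (gt.fV (T'.tl a)) = N.tl (g.fA a) := by
            rw [hcommV, g.tl_comm]
          refine (hlift (g.fA a) (gt.fV (T'.tl a)) hfv).unique
            ⟨?_, h'A a⟩ ⟨htl a, hcommA a⟩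
          rw [h'.tl_comm, ihA]
        rw [← ha, ← h'.hd_comm, ← gt.hd_comm, hAeq]
  have hAeq : ∀ a, h'.fA a = gt.fA a := by
    intro a
    have hfv : f.fV (gt.fV (T'.tl a)) = N.tl (g.fA a) := by
      rw [hcommV, g.tl_comm]
    refine (hlift (g.fA a) (gt.fV (T'.tl a)) hfv).unique
      ⟨?_, h'A a⟩ ⟨htl a, hcommA a⟩
    rw [h'.tl_comm, hVeq]
  exact DgrLift.mor_ext (funext hVeq) (funext hAeq)
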